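/- Let p be a prime, ξ a primitive p-th root of unity in ℂ, and a_0, ..., a_{p-1} nonnegative integers such that Σ_i a_i = p, Σ_i a_i^2 = 2p - 1, and for every u ∈ ℤ/pℤ with u ≠ 0, Σ_{i ∈ ℤ/pℤ} a_i · a_{i+u} = p - 1 (indices mod p). Then |Σ_{i=0}^{p-1} a_i ξ^i|^2 = p. -/

import Mathlib

theorem stmt4 (p : ℕ) [hp : Fact p.Prime] (ξ : ℂ) (hξ : IsPrimitiveRoot ξ p)
    (a : ZMod p → ℕ)
    (h1 : ∑ i : ZMod p, a i = p)
    (h2 : ∑ i : ZMod p, (a i) ^ 2 = 2 * p - 1)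
    (h3 : ∀ u : ZMod p, u ≠ 0 → ∑ i : ZMod p, a i * a (i + u) = p - 1) :
    ‖∑ i : ZMod p, (a i : ℂ) * ξ ^ (i.val)‖ ^ 2 = p := by
  have hpp := hp.out
  have hp2 : 2 ≤ p := hpp.two_le
  have hp0 : p ≠ 0 := hpp.ne_zero
  have hξp : ξ ^ p = 1 := hξ.pow_eq_one
  set e : ZMod p → ℂ := fun i => ξ ^ i.val with he
  have hmul : ∀ i j : ZMod p, e (i + j) = e i * e j := by
    intro i j
    show ξ ^ (i + j).val = ξ ^ i.val * ξ ^ j.val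
    rw [← pow_add, ZMod.val_add]
    conv_rhs => rw [← Nat.div_add_mod (i.val + j.val) p, pow_add, pow_mul, hξp, one_pow, one_mul]
  have he0 : e 0 = 1 := by
    show ξ ^ (0 : ZMod p).val = 1
    simp
  have hinv : ∀ i : ZMod p, e (-i) = (e i)⁻¹ := by
    intro i
    refine eq_inv_of_mul_eq_one_left ?_
    rw [← hmul]; simp [he0]
  have habs : ∀ i : ZMod p, ‖e i‖ = 1 := by
    intro i
    show ‖ξ ^ i.val‖ = 1
    have h1' : ‖ξ‖ = 1 := by
      exact hξ.norm'_eq_one hp0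
    rw [norm_pow, h1', one_pow]
  have hconj : ∀ i : ZMod p, (starRingEnd ℂ) (e i) = e (-i) := by
    intro i
    rw [hinv, Complex.inv_eq_conj (habs i)]
  set S : ℂ := ∑ i : ZMod p, (a i : ℂ) * ξ ^ i.val with hS
  have hSe : S = ∑ i : ZMod p, (a i : ℂ) * e i := rfl
  -- sum of all e values is zero
  have hsum0 : ∑ i : ZMod p, e i = 0 := by
    have : ∑ i : ZMod p, e i = ∑ k ∈ Finset.range p, ξ ^ k := by
      refine Finset.sum_nbij' (fun i : ZMod p => i.val) (fun k => (k : ZMod p)) ?_ ?_ ?_ ?_ ?_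
      · intro i _; exact Finset.mem_range.mpr (ZMod.val_lt i)
      · intro k _; exact Finset.mem_univ _
      · intro i _; exact ZMod.natCast_rightInverse i
      · intro k hk; exact ZMod.val_cast_of_lt (Finset.mem_range.mp hk)
      · intro i _; rfl
    rw [this, hξ.geom_sum_eq_zero (by omega)]
  -- main identity
  have key : S * (starRingEnd ℂ) S = (p : ℂ) := by
    have hconjS : (starRingEnd ℂ) S = ∑ j : ZMod p, (a j : ℂ) * e (-j) := by
      rw [hSe, map_sum]
      refine Finset.sum_congr rfl fun j _ => ?_
      rw [map_mul, hconj, Complex.conj_natCast]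
    rw [hSe, hconjS, Finset.sum_mul_sum]
    have step1 : ∀ i : ZMod p, ∑ j : ZMod p, ((a i : ℂ) * e i) * ((a j : ℂ) * e (-j))
        = ∑ u : ZMod p, ((a i : ℂ) * (a (i + u) : ℂ)) * e (-u) := by
      intro i
      rw [← Equiv.sum_comp (Equiv.addLeft i)
        (fun j => ((a i : ℂ) * e i) * ((a j : ℂ) * e (-j)))]
      refine Finset.sum_congr rfl fun u _ => ?_
      simp only [Equiv.coe_addLeft]
      calc (a i : ℂ) * e i * ((a (i + u) : ℂ) * e (-(i + u)))
          = ((a i : ℂ) * (a (i + u) : ℂ)) * (e i * e (-(i + u))) := by ring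
        _ = ((a i : ℂ) * (a (i + u) : ℂ)) * e (-u) := by
            rw [← hmul]; congr 2; ring
    calc ∑ i : ZMod p, ∑ j : ZMod p, ((a i : ℂ) * e i) * ((a j : ℂ) * e (-j))
        = ∑ i : ZMod p, ∑ u : ZMod p, ((a i : ℂ) * (a (i + u) : ℂ)) * e (-u) := by
          exact Finset.sum_congr rfl fun i _ => step1 i
      _ = ∑ u : ZMod p, ∑ i : ZMod p, ((a i : ℂ) * (a (i + u) : ℂ)) * e (-u) :=
          Finset.sum_comm
      _ = ∑ u : ZMod p, ((∑ i : ZMod p, a i * a (i + u) : ℕ) : ℂ) * e (-u) := by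
          refine Finset.sum_congr rfl fun u _ => ?_
          rw [← Finset.sum_mul]
          push_cast
          ring
      _ = (p : ℂ) := by
          rw [← Finset.sum_erase_add _ _ (Finset.mem_univ (0 : ZMod p))]
          have hz : ((∑ i : ZMod p, a i * a (i + 0) : ℕ) : ℂ) * e (-0) = ((2 * p - 1 : ℕ) : ℂ) := by
            simp only [add_zero, neg_zero, he0, mul_one]
            norm_cast
            rw [← h2]
            exact Finset.sum_congr rfl fun i _ => (sq (a i)).symm
          have hnz : ∑ u ∈ Finset.univ.erase (0 : ZMod p),
              ((∑ i : ZMod p, a i * a (i + u) : ℕ) : ℂ) * e (-u)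
              = ((p - 1 : ℕ) : ℂ) * ∑ u ∈ Finset.univ.erase (0 : ZMod p), e (-u) := by
            rw [Finset.mul_sum]
            refine Finset.sum_congr rfl fun u hu => ?_
            rw [h3 u (Finset.ne_of_mem_erase hu)]
          have hes : ∑ u ∈ Finset.univ.erase (0 : ZMod p), e (-u) = -1 := by
            have hall : ∑ u : ZMod p, e (-u) = 0 := by
              rw [← hsum0]
              exact Equiv.sum_comp (Equiv.neg (ZMod p)) e
            have := Finset.sum_erase_add Finset.univ (fun u : ZMod p => e (-u))
              (Finset.mem_univ (0 : ZMod p))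
            rw [hall] at this
            simp only [neg_zero, he0] at this
            linear_combination this
          rw [hz, hnz, hes]
          have c1 : ((2 * p - 1 : ℕ) : ℂ) = 2 * p - 1 := by
            push_cast [Nat.cast_sub (by omega : 1 ≤ 2 * p)]; ring
          have c2 : ((p - 1 : ℕ) : ℂ) = p - 1 := by
            push_cast [Nat.cast_sub (by omega : 1 ≤ p)]; ring
          rw [c1, c2]; ring
  have hnormSq : Complex.normSq S = p := by
    have := Complex.mul_conj S
    rw [key] at this
    exact_mod_cast this.symm
  rw [Complex.sq_norm, hnormSq]
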